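/- Let α₁, …, αₙ be unit vectors in a real inner product space with ⟨αᵢ, αⱼ⟩ = σ for all i ≠ j, where -1/(n-1) < σ < 1. Define α₀ = (α₁ + ⋯ + αₙ)/n, c = sqrt((1 + (n-1)σ)/(1-σ)), and α̃ᵢ = α₀ + c(αᵢ - α₀). Then for all i ≠ j, ⟨α̃ᵢ, α̃ⱼ⟩ = 0. -/

import Mathlib

open scoped RealInnerProductSpace

/-- The explicit orthogonalization: for unit vectors with all pairwise inner
products equal to `σ ∈ (-1/(n-1), 1)`, the vectors
`α̃ᵢ = α₀ + c (αᵢ - α₀)` with `α₀ = (α₁ + ⋯ + αₙ)/n` and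
`c = √((1+(n-1)σ)/(1-σ))` are pairwise orthogonal. -/
theorem tilde_vectors_orthogonal
    {V : Type*} [NormedAddCommGroup V] [InnerProductSpace ℝ V]
    {n : ℕ} (hn : 1 ≤ n) (α : Fin n → V)
    (hunit : ∀ i, ⟪α i, α i⟫ = 1)
    (σ : ℝ) (hσ₁ : -1 / ((n : ℝ) - 1) < σ) (hσ₂ : σ < 1)
    (hangle : ∀ i j, i ≠ j → ⟪α i, α j⟫ = σ) :
    ∀ i j, i ≠ j →
      ⟪((1 / (n : ℝ)) • (∑ k, α k)) +
          (Real.sqrt ((1 + ((n : ℝ) - 1) * σ) / (1 - σ))) •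
            (α i - (1 / (n : ℝ)) • (∑ k, α k)),
        ((1 / (n : ℝ)) • (∑ k, α k)) +
          (Real.sqrt ((1 + ((n : ℝ) - 1) * σ) / (1 - σ))) •
            (α j - (1 / (n : ℝ)) • (∑ k, α k))⟫ = 0 := by
  intro i j hij
  have hnontriv : Nontrivial (Fin n) := ⟨⟨i, j, hij⟩⟩
  have hn2 : 2 ≤ n := by
    have := Fintype.one_lt_card (α := Fin n)
    exact (by simpa using this : 1 < n)
  have hN : (2:ℝ) ≤ (n:ℝ) := by exact_mod_cast hn2
  have hN1 : (0:ℝ) < (n:ℝ) - 1 := by linarith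
  have hT : 0 < 1 + ((n:ℝ) - 1) * σ := by
    have := (div_lt_iff₀ hN1).mp hσ₁
    nlinarith
  have h1σ : (0:ℝ) < 1 - σ := by linarith
  have hks : ∀ k : Fin n, ⟪α k, ∑ l, α l⟫ = 1 + ((n:ℝ) - 1) * σ := by
    intro k
    rw [inner_sum, ← Finset.add_sum_erase _ _ (Finset.mem_univ k), hunit k]
    have : ∀ l ∈ Finset.univ.erase k, ⟪α k, α l⟫ = σ := fun l hl =>
      hangle k l (Ne.symm (Finset.ne_of_mem_erase hl))
    rw [Finset.sum_congr rfl this, Finset.sum_const, Finset.card_erase_of_mem (Finset.mem_univ k)]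
    simp only [Finset.card_univ, Fintype.card_fin, nsmul_eq_mul]
    have : ((n - 1 : ℕ) : ℝ) = (n:ℝ) - 1 := by
      have : (1:ℕ) ≤ n := hn
      push_cast [Nat.cast_sub this]
      ring
    rw [this]
  have hss : ⟪(∑ l, α l), (∑ l, α l)⟫ = (n:ℝ) * (1 + ((n:ℝ) - 1) * σ) := by
    rw [sum_inner]
    rw [Finset.sum_congr rfl (fun l _ => hks l), Finset.sum_const]
    simp only [Finset.card_univ, Fintype.card_fin, nsmul_eq_mul]
  set c := Real.sqrt ((1 + ((n : ℝ) - 1) * σ) / (1 - σ)) with hcdef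
  have hc : c * c = (1 + ((n:ℝ) - 1) * σ) / (1 - σ) :=
    Real.mul_self_sqrt (by positivity)
  have hsj : ⟪(∑ l, α l), α j⟫ = 1 + ((n:ℝ) - 1) * σ := by
    rw [real_inner_comm]; exact hks j
  have hn0 : (n:ℝ) ≠ 0 := by positivity
  simp only [inner_add_left, inner_add_right, inner_sub_left, inner_sub_right,
    real_inner_smul_left, real_inner_smul_right, hss, hks i, hks j, hsj,
    hangle i j hij]
  have hc2 : c ^ 2 * (1 - σ) = 1 + ((n:ℝ) - 1) * σ := by
    rw [sq, hc]; field_simp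
  field_simp
  linear_combination -hc2
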